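/- Let n ≥ 1, α ∈ [0,1], and let Φ be an n×n real matrix with nonnegative entries, all of whose row sums and column sums equal 1 (doubly stochastic), and with Φ_{ij} ≥ α/n for all i, j. Then for every probability vector p on {1,…,n} (p_i ≥ 0, ∑_i p_i = 1), ∑_i (Φp)_i · log(n·(Φp)_i) ≤ (1−α) · ∑_i p_i · log(n·p_i), where (Φp)_i = ∑_j Φ_{ij} p_j and 0·log 0 := 0. -/

import Mathlib

open Finset in
/-- The classical ergodic instance of Lemma 3.6: a doubly stochastic matrix `Φ` with
entries `Φ i j ≥ α/n` contracts relative entropy to the uniform distribution by the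
factor `1 - α`:  `∑ i (Φp)_i log(n·(Φp)_i) ≤ (1-α) ∑ i p_i log(n·p_i)`.
(In Lean, `Real.log 0 = 0`, so the convention `0·log 0 = 0` holds automatically.) -/
theorem doubly_stochastic_entropy_contraction
    (n : ℕ) (hn : 1 ≤ n) (α : ℝ) (hα0 : 0 ≤ α) (hα1 : α ≤ 1)
    (Φ : Fin n → Fin n → ℝ)
    (hΦnonneg : ∀ i j, 0 ≤ Φ i j)
    (hrow : ∀ i, ∑ j, Φ i j = 1)
    (hcol : ∀ j, ∑ i, Φ i j = 1)
    (hdom : ∀ i j, α / n ≤ Φ i j)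
    (p : Fin n → ℝ) (hp : ∀ i, 0 ≤ p i) (hpsum : ∑ i, p i = 1) :
    ∑ i, (∑ j, Φ i j * p j) * Real.log (n * (∑ j, Φ i j * p j)) ≤
      (1 - α) * ∑ i, p i * Real.log (n * p i) := by
  have hn0 : (0:ℝ) < n := by exact_mod_cast Nat.lt_of_lt_of_le Nat.zero_lt_one hn
  have hn1 : (1:ℝ) ≤ n := by exact_mod_cast hn
  set f : ℝ → ℝ := fun x => x * Real.log (n * x) with hfdef
  -- convexity of f on [0, ∞)
  have hf : ConvexOn ℝ (Set.Ici 0) f := by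
    have hlin : ConvexOn ℝ (Set.Ici (0:ℝ)) (Real.log n • (id : ℝ → ℝ)) :=
      (convexOn_id (convex_Ici 0)).smul (Real.log_nonneg hn1)
    have h1 : ConvexOn ℝ (Set.Ici (0:ℝ))
        (fun x => x * Real.log x + Real.log n • x) :=
      Real.convexOn_mul_log.add hlin
    refine h1.congr ?_
    intro x hx
    rcases eq_or_lt_of_le (Set.mem_Ici.mp hx) with h | h
    · simp [f, ← h]
    · simp only [f, smul_eq_mul]
      rw [Real.log_mul (ne_of_gt hn0) (ne_of_gt h)]
      ring
  have hfn : f ((n:ℝ)⁻¹) = 0 := by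
    simp [f, mul_inv_cancel₀ (ne_of_gt hn0)]
  -- Jensen per row
  have key : ∀ i, f (∑ j, Φ i j * p j) ≤ ∑ j, (Φ i j - α / n) * f (p j) := by
    intro i
    have hwsum : ∑ j, (Φ i j - α / n) = 1 - α := by
      rw [Finset.sum_sub_distrib, hrow i, Finset.sum_const, Finset.card_univ,
        Fintype.card_fin, nsmul_eq_mul, mul_div_cancel₀ _ (ne_of_gt hn0)]
    have hJ := hf.map_sum_le (t := (Finset.univ : Finset (Option (Fin n))))
      (w := fun o => o.elim α (fun j => Φ i j - α / n))
      (p := fun o => o.elim ((n:ℝ)⁻¹) p)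
      (fun o _ => by
        cases o with
        | none => exact hα0
        | some j => exact sub_nonneg.mpr (hdom i j))
      (by simp [Fintype.sum_option, hwsum])
      (fun o _ => by
        cases o with
        | none => exact Set.mem_Ici.mpr (inv_nonneg.mpr hn0.le)
        | some j => exact Set.mem_Ici.mpr (hp j))
    rw [Fintype.sum_option, Fintype.sum_option] at hJ
    simp only [Option.elim, smul_eq_mul] at hJ
    have harg : α * (n:ℝ)⁻¹ + ∑ j, (Φ i j - α / n) * p j = ∑ j, Φ i j * p j := by
      have : ∑ j, (Φ i j - α / n) * p j
          = ∑ j, Φ i j * p j - (α / n) * ∑ j, p j := by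
        rw [Finset.mul_sum, ← Finset.sum_sub_distrib]; exact Finset.sum_congr rfl (fun j _ => by ring)
      rw [this, hpsum]; ring_nf
    rw [harg, hfn, mul_zero, zero_add] at hJ
    exact hJ
  calc ∑ i, f (∑ j, Φ i j * p j)
      ≤ ∑ i, ∑ j, (Φ i j - α / n) * f (p j) :=
        Finset.sum_le_sum (fun i _ => key i)
    _ = ∑ j, (∑ i, (Φ i j - α / n)) * f (p j) := by
        rw [Finset.sum_comm]
        exact Finset.sum_congr rfl (fun j _ => (Finset.sum_mul _ _ _).symm)
    _ = (1 - α) * ∑ j, f (p j) := by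
        rw [Finset.mul_sum]
        refine Finset.sum_congr rfl (fun j _ => ?_)
        congr 1
        rw [Finset.sum_sub_distrib, hcol j, Finset.sum_const, Finset.card_univ,
          Fintype.card_fin, nsmul_eq_mul, mul_div_cancel₀ _ (ne_of_gt hn0)]
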